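/- (Theorem 1 for IHTC, exact support recovery) Under the setting of the IHTC continuation algorithm — Ψ ∈ ℝ^{n×p} with unit-norm columns and mutual coherence μ satisfying μ·s < 1/2; x† ∈ ℝ^p with support A†, |A†| = s ≥ 1; y = Ψ x† + η with ‖η‖₂ ≤ ε > 0; C₀ > 1/(2(1 − 2μs)²); α = (1 − 1/√(2C₀))/(μs); γ ∈ [(2μs/(1 − 1/√(2C₀)))², 1); K ≥ 1; λ_ℓ = γ^ℓ λ₀ with ‖x†‖_{ℓ∞} ≤ α √(2γλ₀); x(λ₀) = 0 and x(λ_ℓ) obtained by K iterations of z ↦ H_{λ_ℓ}(z + Ψᵗ(y − Ψ z)) from x(λ_{ℓ−1}); output x* = x(λ_{ℓ*−1}) where ℓ* is the first index with λ_{ℓ*} < C₀ε² — if min_{i ∈ A†} |x†_i| > (√(2C₀) − 1)ε/(μs), then supp(x*) = A†. -/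

import Mathlib

open Finset Matrix

/-- The hard-thresholding operator `H_λ(t) = t` if `|t| > √(2λ)`, else `0`. -/
noncomputable def hardThresh (lam t : ℝ) : ℝ :=
  if Real.sqrt (2 * lam) < |t| then t else 0

set_option maxHeartbeats 1600000 in
/-- Theorem 1 for IHTC, exact support recovery: in the IHTC continuation setting, if
`min_{i ∈ A†} |x†_i| > (√(2C₀) − 1)ε/(μs)`, then the output `x* = x(λ_{ℓ*−1})`
satisfies `supp(x*) = A†`. -/
theorem ihtc_exact_support_recovery {n p : ℕ} (Ψ : Matrix (Fin n) (Fin p) ℝ)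
    (μ ε C₀ α γ lam₀ : ℝ) (s K : ℕ)
    (xdag : Fin p → ℝ) (η y : Fin n → ℝ) (Adag : Finset (Fin p))
    (hcol : ∀ i, ∑ k, Ψ k i ^ 2 = 1)
    (hcoh : ∀ i j, i ≠ j → |∑ k, Ψ k i * Ψ k j| ≤ μ) (hμpos : 0 < μ)
    (hsuppdag : Function.support xdag = (Adag : Set (Fin p)))
    (hcard : Adag.card = s) (hs : 1 ≤ s) (hμs : μ * s < 1 / 2)
    (hy : y = Ψ.mulVec xdag + η)
    (hη : Real.sqrt (∑ k, η k ^ 2) ≤ ε) (hε : 0 < ε)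
    (hC : 1 / (2 * (1 - 2 * μ * s) ^ 2) < C₀)
    (hα : α = (1 - 1 / Real.sqrt (2 * C₀)) / (μ * s))
    (hγ : γ ∈ Set.Ico ((2 * μ * s / (1 - 1 / Real.sqrt (2 * C₀))) ^ 2) 1)
    (hK : 1 ≤ K)
    (xseq : ℕ → Fin p → ℝ)
    (hx0 : xseq 0 = 0)
    (hxstep : ∀ ℓ : ℕ, xseq (ℓ + 1) =
      (fun z : Fin p → ℝ => fun i =>
          hardThresh (γ ^ (ℓ + 1) * lam₀)
            (z i + Ψ.transpose.mulVec (y - Ψ.mulVec z) i))^[K] (xseq ℓ))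
    (hlam₀ : ‖xdag‖ ≤ α * Real.sqrt (2 * γ * lam₀))
    (lstar : ℕ) (hlstar_pos : 1 ≤ lstar)
    (hlstar : γ ^ lstar * lam₀ < C₀ * ε ^ 2)
    (hlstar_first : ∀ m < lstar, C₀ * ε ^ 2 ≤ γ ^ m * lam₀)
    (hmin : ∀ i ∈ Adag, (Real.sqrt (2 * C₀) - 1) * ε / (μ * s) < |xdag i|) :
    Function.support (xseq (lstar - 1)) = (Adag : Set (Fin p)) := by
  classical
  -- basic positivity facts
  have hs' : (1 : ℝ) ≤ (s : ℝ) := by exact_mod_cast hs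
  have hμs0 : 0 < μ * s := mul_pos hμpos (by linarith)
  have h2μs1 : 2 * (μ * s) < 1 := by linarith
  have hXpos : (0 : ℝ) < 1 - 2 * μ * s := by linarith [hμs]
  have hC0 : 0 < C₀ := lt_trans (by positivity) hC
  set S := Real.sqrt (2 * C₀) with hS
  have hSpos : 0 < S := Real.sqrt_pos.mpr (by linarith)
  have hS2 : S ^ 2 = 2 * C₀ := Real.sq_sqrt (by linarith)
  have hsqrt2C : 1 / (1 - 2 * μ * s) < S := by
    have h2 : (1 / (1 - 2 * μ * (s : ℝ))) ^ 2 < 2 * C₀ := by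
      rw [div_pow, one_pow, div_lt_iff₀ (by positivity)]
      rw [div_lt_iff₀ (by positivity)] at hC
      nlinarith
    exact (Real.lt_sqrt (by positivity)).mpr h2
  have hS1 : 1 < S := lt_of_le_of_lt (by rw [le_div_iff₀ hXpos]; nlinarith) hsqrt2C
  set c := 1 / S with hc
  have hcpos : 0 < c := by positivity
  have hclt : c < 1 - 2 * μ * s := by
    rw [hc]
    calc 1 / S < 1 / (1 / (1 - 2 * μ * s)) :=
          one_div_lt_one_div_of_lt (by positivity) hsqrt2C
      _ = 1 - 2 * μ * s := one_div_one_div _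
  set b := 1 - c with hb
  have hbpos : 0 < b := by simp only [hb]; linarith [hcpos, hclt, hXpos]
  have h2μsb : 2 * (μ * s) < b := by simp only [hb]; linarith
  have hα' : α = b / (μ * s) := hα
  have hαpos : 0 < α := by rw [hα']; positivity
  have hμsα : μ * s * α = b := by rw [hα']; field_simp
  have hγlo : (2 * μ * s / b) ^ 2 ≤ γ := by
    have := hγ.1
    convert this using 3 <;> simp [hb, hc]
  have hγ1 : γ < 1 := hγ.2
  have hγpos : 0 < γ := lt_of_lt_of_le (by positivity) hγlo
  have hsγ : 2 * μ * s / b ≤ Real.sqrt γ := by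
    have h := Real.sqrt_le_sqrt hγlo
    rwa [Real.sqrt_sq (by positivity)] at h
  have hsγpos : 0 < Real.sqrt γ := Real.sqrt_pos.mpr hγpos
  have hαγ : 2 ≤ α * Real.sqrt γ := by
    calc (2 : ℝ) = b / (μ * s) * (2 * μ * s / b) := by field_simp
      _ ≤ b / (μ * s) * Real.sqrt γ := by
          apply mul_le_mul_of_nonneg_left hsγ (by positivity)
      _ = α * Real.sqrt γ := by rw [hα']
  have hα2 : 2 ≤ α := by
    have hsγ1 : Real.sqrt γ ≤ 1 := by
      rw [show (1:ℝ) = Real.sqrt 1 by simp]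
      exact Real.sqrt_le_sqrt (le_of_lt hγ1)
    nlinarith
  have hlam0pos : 0 < lam₀ := by
    have h := hlstar_first 0 hlstar_pos
    rw [pow_zero, one_mul] at h
    exact lt_of_lt_of_le (mul_pos hC0 (pow_pos hε 2)) h
  -- xdag vanishes off Adag and is nonzero on Adag
  have hxd0 : ∀ j, j ∉ Adag → xdag j = 0 := by
    intro j hj
    by_contra h
    exact hj (by rw [← Finset.mem_coe, ← hsuppdag]; exact h)
  -- noise bound per coordinate
  have hηi : ∀ i : Fin p, |∑ k, Ψ k i * η k| ≤ ε := by
    intro i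
    have hη2 : ∑ k, η k ^ 2 ≤ ε ^ 2 := by
      have h0 : 0 ≤ ∑ k, η k ^ 2 := by positivity
      calc ∑ k, η k ^ 2 = (Real.sqrt (∑ k, η k ^ 2)) ^ 2 := (Real.sq_sqrt h0).symm
        _ ≤ ε ^ 2 := pow_le_pow_left₀ (Real.sqrt_nonneg _) hη 2
    have hcs := Finset.sum_mul_sq_le_sq_mul_sq Finset.univ (fun k => Ψ k i) η
    rw [hcol i, one_mul] at hcs
    calc |∑ k, Ψ k i * η k| = Real.sqrt ((∑ k, Ψ k i * η k) ^ 2) :=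
          (Real.sqrt_sq_eq_abs _).symm
      _ ≤ Real.sqrt (ε ^ 2) := Real.sqrt_le_sqrt (le_trans hcs hη2)
      _ = ε := Real.sqrt_sq hε.le
  -- the iteration map
  set F : ℝ → (Fin p → ℝ) → Fin p → ℝ := fun lam z i =>
    hardThresh lam (z i + Ψ.transpose.mulVec (y - Ψ.mulVec z) i) with hF
  -- key coordinate bound
  have key : ∀ z : Fin p → ℝ, (∀ j ∉ Adag, z j = 0) → ∀ D : ℝ,
      (∀ j, |z j - xdag j| ≤ D) → ∀ i,
      |(z i + Ψ.transpose.mulVec (y - Ψ.mulVec z) i) - xdag i| ≤ μ * s * D + ε := by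
    intro z hz D hzD i
    have hD0 : 0 ≤ D := le_trans (abs_nonneg _) (hzD i)
    have hge : (z i + Ψ.transpose.mulVec (y - Ψ.mulVec z) i) - xdag i
        = (∑ j ∈ Finset.univ.erase i, (∑ k, Ψ k i * Ψ k j) * (xdag j - z j))
          + ∑ k, Ψ k i * η k := by
      have h1 : Ψ.transpose.mulVec (y - Ψ.mulVec z) i
          = (∑ j, (∑ k, Ψ k i * Ψ k j) * (xdag j - z j)) + ∑ k, Ψ k i * η k := by
        simp only [hy, Matrix.mulVec, Matrix.transpose_apply, dotProduct, Pi.sub_apply,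
          Pi.add_apply]
        have keyk : ∀ k, Ψ k i * ((∑ j, Ψ k j * xdag j) + η k - ∑ j, Ψ k j * z j)
            = (∑ j, (Ψ k i * Ψ k j) * (xdag j - z j)) + Ψ k i * η k := by
          intro k
          have h2 : ∑ j, (Ψ k i * Ψ k j) * (xdag j - z j)
              = Ψ k i * ((∑ j, Ψ k j * xdag j) - ∑ j, Ψ k j * z j) := by
            rw [← Finset.sum_sub_distrib, Finset.mul_sum]
            exact Finset.sum_congr rfl fun j _ => by ring
          rw [h2]; ring
        rw [Finset.sum_congr rfl (fun k _ => keyk k), Finset.sum_add_distrib,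
          Finset.sum_comm]
        congr 1
        exact Finset.sum_congr rfl fun j _ => (Finset.sum_mul _ _ _).symm
      rw [h1, ← Finset.add_sum_erase _ _ (Finset.mem_univ i)]
      have hGii : ∑ k, Ψ k i * Ψ k i = 1 := by
        rw [← hcol i]; exact Finset.sum_congr rfl fun k _ => (sq (Ψ k i)).symm
      rw [hGii]; ring
    rw [hge]
    have hrest : |∑ j ∈ Finset.univ.erase i, (∑ k, Ψ k i * Ψ k j) * (xdag j - z j)|
        ≤ μ * s * D := by
      have hsub : ∑ j ∈ Finset.univ.erase i, (∑ k, Ψ k i * Ψ k j) * (xdag j - z j)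
          = ∑ j ∈ Adag.erase i, (∑ k, Ψ k i * Ψ k j) * (xdag j - z j) := by
        refine (Finset.sum_subset (fun j hj => Finset.mem_erase.mpr
          ⟨(Finset.mem_erase.mp hj).1, Finset.mem_univ j⟩) ?_).symm
        intro j hj hj'
        have hji : j ≠ i := (Finset.mem_erase.mp hj).1
        have hjA : j ∉ Adag := fun h => hj' (Finset.mem_erase.mpr ⟨hji, h⟩)
        rw [hxd0 j hjA, hz j hjA]; ring
      rw [hsub]
      calc |∑ j ∈ Adag.erase i, (∑ k, Ψ k i * Ψ k j) * (xdag j - z j)|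
          ≤ ∑ j ∈ Adag.erase i, |(∑ k, Ψ k i * Ψ k j) * (xdag j - z j)| :=
            Finset.abs_sum_le_sum_abs _ _
        _ ≤ ∑ _j ∈ Adag.erase i, μ * D := by
            apply Finset.sum_le_sum
            intro j hj
            rw [abs_mul]
            have hji : i ≠ j := fun h => (Finset.mem_erase.mp hj).1 h.symm
            have h1 := hcoh i j hji
            have h2 : |xdag j - z j| ≤ D := by
              have := hzD j; rwa [abs_sub_comm] at this
            exact mul_le_mul h1 h2 (abs_nonneg _) hμpos.le
        _ = (Adag.erase i).card * (μ * D) := by rw [Finset.sum_const, nsmul_eq_mul]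
        _ ≤ s * (μ * D) := by
            apply mul_le_mul_of_nonneg_right _ (by positivity)
            have : (Adag.erase i).card ≤ Adag.card := Finset.card_erase_le
            exact_mod_cast le_trans this (le_of_eq hcard)
        _ = μ * s * D := by ring
    calc |_ + _| ≤ _ + _ := abs_add_le _ _
      _ ≤ μ * s * D + ε := add_le_add hrest (hηi i)
  -- one application of F at level lam ≥ C₀ ε²
  have stepLem : ∀ lam : ℝ, C₀ * ε ^ 2 ≤ lam → ∀ z : Fin p → ℝ,
      (∀ j ∉ Adag, z j = 0) → (∀ j, |z j - xdag j| ≤ α * Real.sqrt (2 * lam)) →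
      (∀ j ∉ Adag, F lam z j = 0) ∧
      (∀ j, |F lam z j - xdag j| ≤ 2 * Real.sqrt (2 * lam)) ∧
      (∀ j, F lam z j = 0 → |xdag j| ≤ 2 * Real.sqrt (2 * lam)) := by
    intro lam hlam z hz hzD
    set T := Real.sqrt (2 * lam) with hT
    have hlampos : 0 < lam := lt_of_lt_of_le (mul_pos hC0 (pow_pos hε 2)) hlam
    have hTpos : 0 < T := Real.sqrt_pos.mpr (by linarith)
    have hεT : ε ≤ c * T := by
      have h1 : ε * S ≤ T := by
        rw [hT]
        refine (Real.le_sqrt (by positivity) (by linarith)).mpr ?_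
        calc (ε * S) ^ 2 = ε ^ 2 * S ^ 2 := by ring
          _ = 2 * (C₀ * ε ^ 2) := by rw [hS2]; ring
          _ ≤ 2 * lam := by linarith
      rw [hc]
      rw [div_mul_eq_mul_div, le_div_iff₀ hSpos]
      linarith [h1]
    have hgT : ∀ i, |(z i + Ψ.transpose.mulVec (y - Ψ.mulVec z) i) - xdag i| ≤ T := by
      intro i
      calc |(z i + Ψ.transpose.mulVec (y - Ψ.mulVec z) i) - xdag i|
          ≤ μ * s * (α * T) + ε := key z hz _ hzD i
        _ ≤ b * T + c * T := by
            have : μ * s * (α * T) = b * T := by rw [← hμsα]; ring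
            linarith [this, hεT]
        _ = T := by rw [hb]; ring
    refine ⟨?_, ?_, ?_⟩
    · intro j hj
      have h0 : xdag j = 0 := hxd0 j hj
      have : |z j + Ψ.transpose.mulVec (y - Ψ.mulVec z) j| ≤ T := by
        have := hgT j; rwa [h0, sub_zero] at this
      simp only [hF, hardThresh, ← hT]
      rw [if_neg (not_lt.mpr this)]
    · intro j
      simp only [hF, hardThresh, ← hT]
      by_cases h : T < |z j + Ψ.transpose.mulVec (y - Ψ.mulVec z) j|
      · rw [if_pos h]; linarith [hgT j]
      · rw [if_neg h]
        push_neg at h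
        have := hgT j
        rw [abs_sub_comm] at this
        calc |0 - xdag j| = |xdag j| := by rw [zero_sub, abs_neg]
          _ ≤ |xdag j - (z j + Ψ.transpose.mulVec (y - Ψ.mulVec z) j)|
              + |z j + Ψ.transpose.mulVec (y - Ψ.mulVec z) j| := by
                have := abs_sub_abs_le_abs_sub (xdag j)
                  (z j + Ψ.transpose.mulVec (y - Ψ.mulVec z) j)
                have h2 := abs_add_le (xdag j - (z j + Ψ.transpose.mulVec (y - Ψ.mulVec z) j))
                  (z j + Ψ.transpose.mulVec (y - Ψ.mulVec z) j)
                simpa using h2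
          _ ≤ T + T := add_le_add this h
          _ = 2 * T := by ring
    · intro j hj0
      simp only [hF, hardThresh, ← hT] at hj0
      by_cases h : T < |z j + Ψ.transpose.mulVec (y - Ψ.mulVec z) j|
      · rw [if_pos h] at hj0
        rw [hj0] at h
        simp at h
        linarith
      · push_neg at h
        have hg := hgT j
        rw [abs_sub_comm] at hg
        calc |xdag j| ≤ |xdag j - (z j + Ψ.transpose.mulVec (y - Ψ.mulVec z) j)|
              + |z j + Ψ.transpose.mulVec (y - Ψ.mulVec z) j| := by
                have h2 := abs_add_le (xdag j - (z j + Ψ.transpose.mulVec (y - Ψ.mulVec z) j))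
                  (z j + Ψ.transpose.mulVec (y - Ψ.mulVec z) j)
                simpa using h2
          _ ≤ T + T := add_le_add hg h
          _ = 2 * T := by ring
  -- invariant preserved through iterations
  have invLem : ∀ lam : ℝ, C₀ * ε ^ 2 ≤ lam → ∀ z : Fin p → ℝ,
      (∀ j ∉ Adag, z j = 0) → (∀ j, |z j - xdag j| ≤ α * Real.sqrt (2 * lam)) →
      ∀ k : ℕ, (∀ j ∉ Adag, (F lam)^[k] z j = 0) ∧
        (∀ j, |(F lam)^[k] z j - xdag j| ≤ α * Real.sqrt (2 * lam)) := by
    intro lam hlam z hz hzD k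
    induction k with
    | zero => exact ⟨hz, hzD⟩
    | succ m ih =>
      rw [Function.iterate_succ_apply']
      obtain ⟨h1, h2, _⟩ := stepLem lam hlam _ ih.1 ih.2
      refine ⟨h1, fun j => le_trans (h2 j) ?_⟩
      have hTnn : 0 ≤ Real.sqrt (2 * lam) := Real.sqrt_nonneg _
      exact mul_le_mul_of_nonneg_right hα2 hTnn
  -- outer induction along the continuation path
  have Out : ∀ ℓ : ℕ, ℓ ≤ lstar - 1 →
      (∀ j ∉ Adag, xseq ℓ j = 0) ∧
      (∀ j, |xseq ℓ j - xdag j| ≤ α * Real.sqrt (2 * (γ ^ (ℓ + 1) * lam₀))) := by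
    intro ℓ
    induction ℓ with
    | zero =>
      intro _
      refine ⟨fun j _ => by rw [hx0]; rfl, fun j => ?_⟩
      rw [hx0]
      have h1 : |xdag j| ≤ ‖xdag‖ := by simpa using norm_le_pi_norm xdag j
      calc |(0 : Fin p → ℝ) j - xdag j| = |xdag j| := by
            simp
        _ ≤ α * Real.sqrt (2 * γ * lam₀) := le_trans h1 hlam₀
        _ = α * Real.sqrt (2 * (γ ^ 1 * lam₀)) := by ring_nf
    | succ m ih =>
      intro hm
      have hm' : m ≤ lstar - 1 := le_trans (Nat.le_succ m) hm
      have hmlt : m + 1 < lstar := by omega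
      obtain ⟨ih1, ih2⟩ := ih hm'
      have hlamge : C₀ * ε ^ 2 ≤ γ ^ (m + 1) * lam₀ := hlstar_first (m + 1) hmlt
      have hiter := hxstep m
      have hinv := invLem (γ ^ (m + 1) * lam₀) hlamge (xseq m) ih1 ih2
      -- identify the iteration map with F
      have hFid : xseq (m + 1) = (F (γ ^ (m + 1) * lam₀))^[K] (xseq m) := hiter
      rw [hFid]
      have hKm : K = (K - 1) + 1 := by omega
      rw [hKm, Function.iterate_succ_apply']
      obtain ⟨hs1, hs2⟩ := hinv (K - 1)
      obtain ⟨h1, h2, _⟩ := stepLem _ hlamge _ hs1 hs2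
      refine ⟨h1, fun j => le_trans (h2 j) ?_⟩
      -- 2 √(2 λ_{m+1}) ≤ α √(2 λ_{m+2}) = α √γ √(2 λ_{m+1})
      have heq : Real.sqrt (2 * (γ ^ (m + 1 + 1) * lam₀))
          = Real.sqrt γ * Real.sqrt (2 * (γ ^ (m + 1) * lam₀)) := by
        rw [← Real.sqrt_mul hγpos.le]
        congr 1
        ring
      rw [heq]
      have hTnn : 0 ≤ Real.sqrt (2 * (γ ^ (m + 1) * lam₀)) := Real.sqrt_nonneg _
      calc 2 * Real.sqrt (2 * (γ ^ (m + 1) * lam₀))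
          ≤ α * Real.sqrt γ * Real.sqrt (2 * (γ ^ (m + 1) * lam₀)) :=
            mul_le_mul_of_nonneg_right hαγ hTnn
        _ = α * (Real.sqrt γ * Real.sqrt (2 * (γ ^ (m + 1) * lam₀))) := by ring
  -- lstar ≥ 2
  have hAne : Adag.Nonempty := Finset.card_pos.mp (by omega)
  have hlstar2 : 2 ≤ lstar := by
    by_contra h
    have hl1 : lstar = 1 := by omega
    obtain ⟨i, hi⟩ := hAne
    have h1 : |xdag i| ≤ ‖xdag‖ := by simpa using norm_le_pi_norm xdag i
    have h2 : γ * lam₀ < C₀ * ε ^ 2 := by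
      have := hlstar; rw [hl1, pow_one] at this; exact this
    have h3 : Real.sqrt (2 * γ * lam₀) < S * ε := by
      refine (Real.sqrt_lt' (by positivity)).mpr ?_
      calc 2 * γ * lam₀ < 2 * (C₀ * ε ^ 2) := by linarith
        _ = (S * ε) ^ 2 := by rw [mul_pow, hS2]; ring
    have h4 : α * Real.sqrt (2 * γ * lam₀) < α * (S * ε) :=
      mul_lt_mul_of_pos_left h3 hαpos
    have h5 : α * (S * ε) = (S - 1) * ε / (μ * s) := by
      rw [hα', hb, hc]
      field_simp
    have := hmin i hi
    linarith [h1, hlam₀, h4, h5 ▸ h4]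
  -- final step
  set L := lstar - 1 with hL
  have hL1 : 1 ≤ L := by omega
  have hLlt : L < lstar := by omega
  have hlamL : C₀ * ε ^ 2 ≤ γ ^ L * lam₀ := hlstar_first L hLlt
  have hLeq : (L - 1) + 1 = L := by omega
  obtain ⟨hO1, hO2⟩ := Out (L - 1) (by omega)
  rw [hLeq] at hO2
  have hiter := hxstep (L - 1)
  rw [hLeq] at hiter
  have hinv := invLem (γ ^ L * lam₀) hlamL (xseq (L - 1)) hO1 hO2
  have hKm : K = (K - 1) + 1 := by omega
  obtain ⟨hs1, hs2⟩ := hinv (K - 1)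
  obtain ⟨h1, _, h3⟩ := stepLem _ hlamL _ hs1 hs2
  have hxL : xseq L = F (γ ^ L * lam₀) ((F (γ ^ L * lam₀))^[K - 1] (xseq (L - 1))) := by
    rw [hiter]
    conv_lhs => rw [hKm]
    rw [Function.iterate_succ_apply']
  -- the crucial lower bound: 2√(2 λ_L) < (S-1) ε / (μ s)
  have hub : 2 * Real.sqrt (2 * (γ ^ L * lam₀)) < (S - 1) * ε / (μ * s) := by
    have hγL : γ * (γ ^ L * lam₀) < C₀ * ε ^ 2 := by
      have : γ ^ lstar = γ * γ ^ L := by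
        rw [← pow_succ']
        congr 1
        omega
      calc γ * (γ ^ L * lam₀) = γ ^ lstar * lam₀ := by rw [this]; ring
        _ < C₀ * ε ^ 2 := hlstar
    have hsq : (2 * Real.sqrt (2 * (γ ^ L * lam₀))) ^ 2 < ((S - 1) * ε / (μ * s)) ^ 2 := by
      have hrs : (2 * Real.sqrt (2 * (γ ^ L * lam₀))) ^ 2 = 4 * (2 * (γ ^ L * lam₀)) := by
        rw [mul_pow, Real.sq_sqrt (by positivity)]
        ring
      rw [hrs]
      have hSb : (S - 1) = S * b := by rw [hb, hc]; field_simp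
      rw [hSb]
      rw [div_pow]
      rw [lt_div_iff₀ (by positivity)]
      -- need 8 γ^L λ₀ (μ s)² < S² b² ε² given 4 μ²s² ≤ γ b² and γ (γ^L λ₀) < C₀ ε²
      have hγb : 4 * (μ * (s : ℝ)) ^ 2 ≤ γ * b ^ 2 := by
        have h := hγlo
        rw [div_pow, div_le_iff₀ (by positivity)] at h
        calc 4 * (μ * (s : ℝ)) ^ 2 = (2 * μ * (s : ℝ)) ^ 2 := by ring
          _ ≤ γ * b ^ 2 := h
      have hLpos : 0 < γ ^ L * lam₀ := by positivity
      calc 4 * (2 * (γ ^ L * lam₀)) * (μ * (s : ℝ)) ^ 2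
          = 2 * (γ ^ L * lam₀) * (4 * (μ * (s : ℝ)) ^ 2) := by ring
        _ ≤ 2 * (γ ^ L * lam₀) * (γ * b ^ 2) :=
            mul_le_mul_of_nonneg_left hγb (by positivity)
        _ = 2 * b ^ 2 * (γ * (γ ^ L * lam₀)) := by ring
        _ < 2 * b ^ 2 * (C₀ * ε ^ 2) :=
            mul_lt_mul_of_pos_left hγL (by positivity)
        _ = (S * b * ε) ^ 2 := by rw [mul_pow, mul_pow, hS2]; ring
    refine lt_of_pow_lt_pow_left₀ 2 ?_ hsq
    exact div_nonneg (mul_nonneg (by linarith [hS1]) hε.le) hμs0.le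
  -- conclude support equality
  ext i
  simp only [Function.mem_support, Finset.mem_coe]
  constructor
  · intro hne
    by_contra hiA
    exact hne (by rw [hxL]; exact h1 i hiA)
  · intro hiA
    intro h0
    rw [hxL] at h0
    have := h3 i h0
    have hm := hmin i hiA
    linarith
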